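/- For a deterministic automaton with n states (n ≥ 2), the Moore equivalence ≡_{n-2} equals the Nerode equivalence; i.e., the depth of Moore's algorithm is at most n − 2. -/
import Mathlib

def run {Q A : Type*} (step : Q → A → Q) : Q → List A → Q
  | q, [] => q
  | q, a :: w => run step (step q a) w

def future {Q A : Type*} (step : Q → A → Q) (F : Set Q) (q : Q) : Set (List A) :=
  {w | run step q w ∈ F}

def mooreFut {Q A : Type*} (step : Q → A → Q) (F : Set Q) (h : ℕ) (q : Q) :
    Set (List A) :=
  {w | w.length ≤ h ∧ run step q w ∈ F}

section Aux

variable {Q A : Type*} (step : Q → A → Q) (F : Set Q)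

lemma R_iff (h : ℕ) (p q : Q) :
    mooreFut step F h p = mooreFut step F h q ↔
      ∀ w : List A, w.length ≤ h → (run step p w ∈ F ↔ run step q w ∈ F) := by
  constructor
  · intro he w hw
    have := Set.ext_iff.mp he w
    simp [mooreFut, hw] at this
    exact this
  · intro hyp
    ext w
    simp only [mooreFut, Set.mem_setOf_eq]
    constructor
    · rintro ⟨hl, hm⟩; exact ⟨hl, (hyp w hl).mp hm⟩
    · rintro ⟨hl, hm⟩; exact ⟨hl, (hyp w hl).mpr hm⟩

lemma R_mono {h : ℕ} {p q : Q}
    (hpq : mooreFut step F (h+1) p = mooreFut step F (h+1) q) :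
    mooreFut step F h p = mooreFut step F h q := by
  rw [R_iff] at hpq ⊢
  exact fun w hw => hpq w (by omega)

lemma R_succ_iff (h : ℕ) (p q : Q) :
    mooreFut step F (h+1) p = mooreFut step F (h+1) q ↔
      ((p ∈ F ↔ q ∈ F) ∧
        ∀ a, mooreFut step F h (step p a) = mooreFut step F h (step q a)) := by
  simp only [R_iff]
  constructor
  · intro hyp
    refine ⟨hyp [] (by simp), fun a w hw => hyp (a :: w) (by simp; omega)⟩
  · rintro ⟨h0, hs⟩ w hw
    cases w with
    | nil => exact h0
    | cons a w => exact hs a w (by simp at hw; omega)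

lemma R_stab {h : ℕ}
    (hst : ∀ p q : Q, mooreFut step F h p = mooreFut step F h q →
      mooreFut step F (h+1) p = mooreFut step F (h+1) q) :
    ∀ k p q, mooreFut step F (h+k) p = mooreFut step F (h+k) q ↔
      mooreFut step F h p = mooreFut step F h q := by
  intro k
  induction k with
  | zero => intro p q; rfl
  | succ k ih =>
    intro p q
    constructor
    · intro hk
      exact ih p q |>.mp (R_mono step F hk)
    · intro h0
      have hk1 : mooreFut step F (h+1) p = mooreFut step F (h+1) q := hst p q h0
      rw [R_succ_iff] at hk1
      show mooreFut step F (h+k+1) p = mooreFut step F (h+k+1) q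
      rw [R_succ_iff]
      exact ⟨hk1.1, fun a => (ih _ _).mpr (hk1.2 a)⟩
  
lemma R_nerode {h : ℕ}
    (hst : ∀ p q : Q, mooreFut step F h p = mooreFut step F h q →
      mooreFut step F (h+1) p = mooreFut step F (h+1) q)
    (p q : Q) :
    mooreFut step F h p = mooreFut step F h q ↔ future step F p = future step F q := by
  constructor
  · intro h0
    ext w
    have := (R_stab step F hst w.length p q).mpr h0
    rw [R_iff] at this
    exact this w (by omega)
  · intro hfut
    rw [R_iff]
    intro w _
    exact Set.ext_iff.mp hfut w

end Aux

noncomputable def Nc {Q A : Type*} [Fintype Q] (step : Q → A → Q) (F : Set Q) (h : ℕ) : ℕ :=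
  (@Finset.image _ _ (Classical.decEq _) (mooreFut step F h) Finset.univ).card

lemma Nc_def {Q A : Type*} [Fintype Q] (step : Q → A → Q) (F : Set Q) (h : ℕ)
    [DecidableEq (Set (List A))] :
    Nc step F h = (Finset.univ.image (mooreFut step F h)).card := by
  unfold Nc; congr!

section Count

variable {Q A : Type*} [Fintype Q] (step : Q → A → Q) (F : Set Q)

lemma Nc_le_card (h : ℕ) : Nc step F h ≤ Fintype.card Q := by
  classical
  rw [Nc_def]
  exact (Finset.card_image_le).trans (by simp)

lemma Nc_two (hF : F.Nonempty) (hFc : Fᶜ.Nonempty) : 2 ≤ Nc step F 0 := by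
  classical
  obtain ⟨p, hp⟩ := hF
  obtain ⟨q, hq⟩ := hFc
  have hne : mooreFut step F 0 p ≠ mooreFut step F 0 q := by
    intro he
    have := Set.ext_iff.mp he []
    simp [mooreFut, run, hp, hq] at this
    exact hq this
  have h1 : mooreFut step F 0 p ∈ (Finset.univ.image (mooreFut step F 0)) :=
    Finset.mem_image_of_mem _ (Finset.mem_univ p)
  have h2 : mooreFut step F 0 q ∈ (Finset.univ.image (mooreFut step F 0)) :=
    Finset.mem_image_of_mem _ (Finset.mem_univ q)
  rw [Nc_def]
  exact Finset.one_lt_card.mpr ⟨_, h1, _, h2, hne⟩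

lemma Nc_lt {h : ℕ} (p q : Q)
    (hpq : mooreFut step F h p = mooreFut step F h q)
    (hne : mooreFut step F (h+1) p ≠ mooreFut step F (h+1) q) :
    Nc step F h < Nc step F (h+1) := by
  classical
  set g : Set (List A) → Set (List A) := fun S => {w ∈ S | w.length ≤ h} with hg
  have hcomp : ∀ r : Q, g (mooreFut step F (h+1) r) = mooreFut step F h r := by
    intro r
    ext w
    simp only [hg, mooreFut, Set.mem_setOf_eq]
    constructor
    · rintro ⟨⟨_, hm⟩, hl⟩; exact ⟨hl, hm⟩
    · rintro ⟨hl, hm⟩; exact ⟨⟨by omega, hm⟩, hl⟩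
  have himg : (Finset.univ.image (mooreFut step F h)) =
      (Finset.univ.image (mooreFut step F (h+1))).image g := by
    rw [Finset.image_image]
    apply Finset.image_congr
    intro r _
    exact (hcomp r).symm
  have hle : Nc step F h ≤ Nc step F (h+1) := by
    rw [Nc_def, Nc_def, himg]
    exact Finset.card_image_le
  rcases lt_or_eq_of_le hle with hlt | heq
  · exact hlt
  · exfalso
    rw [Nc_def, Nc_def] at heq
    have hcard : ((Finset.univ.image (mooreFut step F (h+1))).image g).card =
        (Finset.univ.image (mooreFut step F (h+1))).card := by
      rw [← himg]; exact heq
    have hinj := Finset.injOn_of_card_image_eq hcard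
    apply hne
    apply hinj (Finset.mem_image_of_mem _ (Finset.mem_univ p))
      (Finset.mem_image_of_mem _ (Finset.mem_univ q))
    rw [hcomp p, hcomp q]; exact hpq

end Count

theorem stmt_10 {Q A : Type*} [Fintype Q] (step : Q → A → Q) (F : Set Q)
    (hn : 2 ≤ Fintype.card Q) (hF : F.Nonempty) (hFc : Fᶜ.Nonempty) :
    ∀ p q : Q,
      mooreFut step F (Fintype.card Q - 2) p = mooreFut step F (Fintype.card Q - 2) q ↔
        future step F p = future step F q := by
  classical
  set n := Fintype.card Q with hnn
  -- there is h ≤ n - 2 where the refinement stabilizes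
  have key : ∃ h ≤ n - 2, ∀ p q : Q, mooreFut step F h p = mooreFut step F h q →
      mooreFut step F (h+1) p = mooreFut step F (h+1) q := by
    by_contra hcon
    push_neg at hcon
    -- for all h ≤ n-2, exists discrepancy
    have grow : ∀ k, k ≤ n - 1 → k + 2 ≤ Nc step F k := by
      intro k
      induction k with
      | zero => intro _; exact Nc_two step F hF hFc
      | succ k ih =>
        intro hk
        obtain ⟨p, q, hpq, hne⟩ := hcon k (by omega)
        have := Nc_lt step F p q hpq hne
        have := ih (by omega)
        omega
    have h1 := grow (n - 1) le_rfl
    have h2 := Nc_le_card step F (n - 1)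
    omega
  obtain ⟨h, hh, hst⟩ := key
  intro p q
  have hstab := R_stab step F hst (n - 2 - h) p q
  rw [show h + (n - 2 - h) = n - 2 by omega] at hstab
  rw [hstab]
  exact R_nerode step F hst p q
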